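/- arXiv:2510.07851 — 3 statements merged into one kernel-verified Lean document; each statement's English description precedes it below -/
import Mathlib

section
/- Machine progress: every typed machine state ⊢ (S_A, M, K) : ε => !!t_I is either final (of the form (S_A, i, ε) for a choice i) or has a machine transition. -/
variable {Loc Ch : Type}

/-- FMC terms: variable, push `[N]a.M`, pop `a<x>.M` (de Bruijn binder),
choice `i`, case `M ; i -> N`, and loop `M^i`. -/
inductive Tm (Loc Ch : Type) : Type where
  | var : ℕ → Tm Loc Ch
  | push : Tm Loc Ch → Loc → Tm Loc Ch → Tm Loc Ch
  | pop : Loc → Tm Loc Ch → Tm Loc Ch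
  | choice : Ch → Tm Loc Ch
  | caseOf : Tm Loc Ch → Ch → Tm Loc Ch → Tm Loc Ch
  | loop : Tm Loc Ch → Ch → Tm Loc Ch

namespace Tm

/-- Shift the free de Bruijn indices `≥ d` up by one. -/
def lift : Tm Loc Ch → ℕ → Tm Loc Ch
  | var n, d => if n < d then var n else var (n + 1)
  | push N a M, d => push (N.lift d) a (M.lift d)
  | pop a M, d => pop a (M.lift (d + 1))
  | choice i, _ => choice i
  | caseOf M i N, d => caseOf (M.lift d) i (N.lift d)
  | loop M i, d => loop (M.lift d) i

/-- Capture-avoiding substitution `{N/k}M` for the de Bruijn index `k`. -/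
def subst : Tm Loc Ch → ℕ → Tm Loc Ch → Tm Loc Ch
  | var n, k, N => if n = k then N else if n < k then var n else var (n - 1)
  | push P a M, k, N => push (P.subst k N) a (M.subst k N)
  | pop a M, k, N => pop a (M.subst (k + 1) (N.lift 0))
  | choice i, _, _ => choice i
  | caseOf M i P, k, N => caseOf (M.subst k N) i (P.subst k N)
  | loop M i, k, N => loop (M.subst k N) i

end Tm

variable [DecidableEq Loc]

/-- A memory: a family of stacks of terms indexed by the locations
(stacks are lists with the head as top). -/
def Mem (Loc Ch : Type) := Loc → List (Tm Loc Ch)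

/-- `S.push a N` pushes `N` onto the stack at location `a`. -/
def Mem.push (S : Mem Loc Ch) (a : Loc) (N : Tm Loc Ch) : Mem Loc Ch :=
  Function.update S a (N :: S a)

/-- The empty memory. -/
def Mem.empty : Mem Loc Ch := fun _ => []

/-- A continuation stack: a stack of conditional continuations `(i -> M)`. -/
abbrev CStack (Loc Ch : Type) := List (Ch × Tm Loc Ch)

/-- The transitions of the abstract machine on states `(S, M, K)`. -/
inductive MStep : Mem Loc Ch × Tm Loc Ch × CStack Loc Ch → Mem Loc Ch × Tm Loc Ch × CStack Loc Ch → Prop where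
  | push (S : Mem Loc Ch) (N : Tm Loc Ch) (a : Loc) (M : Tm Loc Ch) (K : CStack Loc Ch) :
      MStep (S, .push N a M, K) (S.push a N, M, K)
  | pop (S : Mem Loc Ch) (a : Loc) (N M : Tm Loc Ch) (K : CStack Loc Ch) :
      MStep (S.push a N, .pop a M, K) (S, M.subst 0 N, K)
  | select (S : Mem Loc Ch) (i : Ch) (M : Tm Loc Ch) (K : CStack Loc Ch) :
      MStep (S, .choice i, (i, M) :: K) (S, M, K)
  | reject (S : Mem Loc Ch) (i j : Ch) (M : Tm Loc Ch) (K : CStack Loc Ch) (h : i ≠ j) :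
      MStep (S, .choice i, (j, M) :: K) (S, .choice i, K)
  | caseOf (S : Mem Loc Ch) (N : Tm Loc Ch) (i : Ch) (M : Tm Loc Ch) (K : CStack Loc Ch) :
      MStep (S, .caseOf N i M, K) (S, N, (i, M) :: K)
  | loop (S : Mem Loc Ch) (M : Tm Loc Ch) (i : Ch) (K : CStack Loc Ch) :
      MStep (S, .loop M i, K) (S, M, (i, .loop M i) :: K)

/-- Types `!!s => !!t_I`: an implication from a memory type (family of stack
types indexed by locations) to a sum type (family of memory types indexed
by a set of choices, represented via `Option`). -/
inductive Ty (Loc Ch : Type) : Type where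
  | arr : (Loc → List (Ty Loc Ch)) → (Ch → Option (Loc → List (Ty Loc Ch))) → Ty Loc Ch

/-- Stack types: lists of types (head = top of stack). -/
abbrev StackTy (Loc Ch : Type) := List (Ty Loc Ch)

/-- Memory types: families of stack types indexed by locations. -/
abbrev MemTy (Loc Ch : Type) := Loc → StackTy Loc Ch

/-- Sum types: families of memory types indexed by a set of choices
(`T i = some m` means `i` is in the index set with memory type `m`). -/
abbrev SumTy (Loc Ch : Type) := Ch → Option (MemTy Loc Ch)

/-- The empty memory type `ε`. -/
def memNil : MemTy Loc Ch := fun _ => []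

/-- `memCons a r s` is `a(r)·!!s`: push the type `r` on top at location `a`. -/
def memCons [DecidableEq Loc] (a : Loc) (r : Ty Loc Ch) (s : MemTy Loc Ch) : MemTy Loc Ch :=
  Function.update s a (r :: s a)

/-- Pointwise concatenation of memory types (`r` on top of `s`). -/
def memApp (r s : MemTy Loc Ch) : MemTy Loc Ch := fun a => r a ++ s a

/-- The singleton sum type `!!m.i`. -/
def sumSingle [DecidableEq Ch] (i : Ch) (m : MemTy Loc Ch) : SumTy Loc Ch :=
  fun j => if j = i then some m else none

/-- Stack expansion of a sum type: place `s` underneath every summand. -/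
def sumExpand (s : MemTy Loc Ch) (T : SumTy Loc Ch) : SumTy Loc Ch :=
  fun i => (T i).map fun m => memApp m s

/-- `sumOver S T` is the sum `!!s_I + !!t_{J∖I}`: `S` overriding `T`. -/
def sumOver (S T : SumTy Loc Ch) : SumTy Loc Ch :=
  fun i => match S i with
    | some m => some m
    | none => T i

variable [DecidableEq Loc] [DecidableEq Ch]

/-- The typing judgement `Γ ⊢ M : t` of the simply-typed FMC with control,
with de Bruijn contexts (lists of types). -/
inductive Typing : List (Ty Loc Ch) → Tm Loc Ch → Ty Loc Ch → Prop where
  | var (Γ : List (Ty Loc Ch)) (n : ℕ) (t : Ty Loc Ch) (h : Γ[n]? = some t) :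
      Typing Γ (.var n) t
  | choice (Γ : List (Ty Loc Ch)) (i : Ch) :
      Typing Γ (.choice i) (.arr memNil (sumSingle i memNil))
  | push (Γ : List (Ty Loc Ch)) (N : Tm Loc Ch) (r : Ty Loc Ch) (a : Loc)
      (M : Tm Loc Ch) (s : MemTy Loc Ch) (T : SumTy Loc Ch) :
      Typing Γ N r → Typing Γ M (.arr (memCons a r s) T) →
      Typing Γ (.push N a M) (.arr s T)
  | pop (Γ : List (Ty Loc Ch)) (r : Ty Loc Ch) (a : Loc) (M : Tm Loc Ch)
      (s : MemTy Loc Ch) (T : SumTy Loc Ch) :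
      Typing (r :: Γ) M (.arr s T) →
      Typing Γ (.pop a M) (.arr (memCons a r s) T)
  | caseOf (Γ : List (Ty Loc Ch)) (M N : Tm Loc Ch) (i : Ch)
      (r s : MemTy Loc Ch) (T : SumTy Loc Ch) :
      Typing Γ M (.arr r (Function.update T i (some s))) →
      Typing Γ N (.arr s T) →
      Typing Γ (.caseOf M i N) (.arr r T)
  | loop (Γ : List (Ty Loc Ch)) (M : Tm Loc Ch) (i : Ch)
      (s : MemTy Loc Ch) (T : SumTy Loc Ch) (h : T i = none) :
      Typing Γ M (.arr s (Function.update T i (some s))) →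
      Typing Γ (.loop M i) (.arr s T)
  | expand (Γ : List (Ty Loc Ch)) (M : Tm Loc Ch)
      (r s : MemTy Loc Ch) (T : SumTy Loc Ch) :
      Typing Γ M (.arr r T) →
      Typing Γ M (.arr (memApp r s) (sumExpand s T))
  | incl (Γ : List (Ty Loc Ch)) (M : Tm Loc Ch) (r : MemTy Loc Ch)
      (T U : SumTy Loc Ch) (h : ∀ i, T i = none ∨ U i = none) :
      Typing Γ M (.arr r T) →
      Typing Γ M (.arr r (sumOver T U))

/-- Typing of memories: pointwise typing of the stacks by the stack types. -/
def MemTyped (S : Mem Loc Ch) (r : MemTy Loc Ch) : Prop :=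
  ∀ a, List.Forall₂ (fun M t => Typing [] M t) (S a) (r a)

/-- Typing of continuation stacks `⊢ K : !!s_I => !!t_J`. -/
inductive ContTyped : CStack Loc Ch → SumTy Loc Ch → SumTy Loc Ch → Prop where
  | nil (T : SumTy Loc Ch) : ContTyped [] T T
  | cons (i : Ch) (M : Tm Loc Ch) (r : MemTy Loc Ch) (S T : SumTy Loc Ch) (K : CStack Loc Ch) :
      Typing [] M (.arr r (sumOver S T)) → ContTyped K S T →
      ContTyped ((i, M) :: K) (Function.update S i (some r)) T

/-- Typing of machine states `⊢ (S, M, K) : ε => !!t_J`. -/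
def StateTyped (st : Mem Loc Ch × Tm Loc Ch × CStack Loc Ch) (T : SumTy Loc Ch) : Prop :=
  ∃ (r : MemTy Loc Ch) (S : SumTy Loc Ch),
    MemTyped st.1 r ∧ Typing [] st.2.1 (.arr r (sumOver S T)) ∧ ContTyped st.2.2 S T

private lemma var_lookup {Γ : List (Ty Loc Ch)} {M : Tm Loc Ch} {t : Ty Loc Ch}
    (h : Typing Γ M t) : ∀ n, M = Tm.var n → ∃ t', Γ[n]? = some t' := by
  induction h with
  | var Γ n t h => intro m hm; cases hm; exact ⟨t, h⟩
  | expand _ _ _ _ _ _ ih => exact ih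
  | incl _ _ _ _ _ _ _ ih => exact ih
  | _ => intro m hm; cases hm

private lemma pop_nonempty {Γ : List (Ty Loc Ch)} {M : Tm Loc Ch} {t : Ty Loc Ch}
    (h : Typing Γ M t) :
    ∀ a M', M = Tm.pop a M' → ∀ r T, t = Ty.arr r T → r a ≠ [] := by
  induction h with
  | pop Γ r a M s T _ _ =>
      intro a' M' hM r' T' ht
      cases hM; cases ht
      simp [memCons, Function.update]
  | expand Γ M r s T _ ih =>
      intro a M' hM r' T' ht
      cases ht
      intro hemp
      simp only [memApp, List.append_eq_nil_iff] at hemp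
      exact ih a M' hM r T rfl hemp.1
  | incl Γ M r T U hdisj _ ih =>
      intro a M' hM r' T' ht; cases ht; exact ih a M' hM r _ rfl
  | _ => intro a M' hM; cases hM

/-- Machine progress: a typed state is either final or has a machine step. -/
theorem machine_progress (S : Mem Loc Ch) (M : Tm Loc Ch) (K : CStack Loc Ch)
    (T : SumTy Loc Ch) (hty : StateTyped (S, M, K) T) :
    (∃ i : Ch, M = Tm.choice i ∧ K = []) ∨
      ∃ st' : Mem Loc Ch × Tm Loc Ch × CStack Loc Ch, MStep (S, M, K) st' := by
  obtain ⟨r, Ssum, hmem, hM, hK⟩ := hty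
  cases M with
  | var n =>
      obtain ⟨t', ht'⟩ := var_lookup hM n rfl
      simp at ht'
  | push N a M => exact Or.inr ⟨_, MStep.push S N a M K⟩
  | pop a M =>
      have hne : r a ≠ [] := pop_nonempty hM a M rfl r _ rfl
      have hS : S a ≠ [] := by
        intro h0
        have h2 := (hmem a).length_eq
        simp only at h2
        rw [h0] at h2
        exact hne (List.eq_nil_of_length_eq_zero h2.symm)
      obtain ⟨N, rest, hSa⟩ := List.exists_cons_of_ne_nil hS
      have hupd : Mem.push (Function.update S a rest) a N = S := by
        simp only [Mem.push, Function.update_idem, Function.update_self]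
        funext x
        by_cases hx : x = a
        · subst hx; simp [Function.update, hSa]
        · simp [Function.update, hx]
      have hstep := MStep.pop (Function.update S a rest) a N M K
      rw [hupd] at hstep
      exact Or.inr ⟨_, hstep⟩
  | choice i =>
      cases K with
      | nil => exact Or.inl ⟨i, rfl, rfl⟩
      | cons p K' =>
          obtain ⟨j, M'⟩ := p
          by_cases hij : i = j
          · subst hij; exact Or.inr ⟨_, MStep.select S i M' K'⟩
          · exact Or.inr ⟨_, MStep.reject S i j M' K' hij⟩
  | caseOf N i M => exact Or.inr ⟨_, MStep.caseOf S N i M K⟩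
  | loop M i => exact Or.inr ⟨_, MStep.loop S M i K⟩
end

section
/- Type inhabitation: every type t of the FMC with control is inhabited by a closed term, namely ⊢ 0_t : t holds in the empty context for the zero term 0_t. -/
variable {Loc Ch : Type}

variable [DecidableEq Loc] [DecidableEq Ch]

/-- A type conforms to the grammar: all memory types and sum types occurring
in it are finitely supported families. -/
inductive TyWF : Ty Loc Ch → Prop where
  | arr (s : MemTy Loc Ch) (T : SumTy Loc Ch)
      (hs1 : {a | s a ≠ []}.Finite)
      (hs2 : ∀ a, ∀ t ∈ s a, TyWF t)
      (hT1 : {i | T i ≠ none}.Finite)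
      (hT2 : ∀ i m, T i = some m → {a | m a ≠ []}.Finite)
      (hT3 : ∀ i m, T i = some m → ∀ a, ∀ t ∈ m a, TyWF t) :
      TyWF (.arr s T)


section Aux

lemma Typing.weaken {Γ Δ : List (Ty Loc Ch)} {M : Tm Loc Ch} {t : Ty Loc Ch}
    (h : Typing Γ M t) : Typing (Γ ++ Δ) M t := by
  induction h generalizing Δ with
  | var Γ n t h =>
      refine Typing.var _ n t ?_
      have hn : n < Γ.length := by
        by_contra hc
        rw [List.getElem?_eq_none (le_of_not_gt hc)] at h
        exact absurd h (by simp)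
      rw [List.getElem?_append_left hn]; exact h
  | choice => exact Typing.choice _ _
  | push _ _ _ _ _ _ _ _ _ ihN ihM => exact Typing.push _ _ _ _ _ _ _ ihN ihM
  | pop _ r a _ _ _ _ ih => exact Typing.pop _ _ _ _ _ _ ih
  | caseOf _ _ _ _ _ _ _ _ _ ih1 ih2 => exact Typing.caseOf _ _ _ _ _ _ _ ih1 ih2
  | loop _ _ _ _ _ h _ ih => exact Typing.loop _ _ _ _ _ h ih
  | expand _ _ _ _ _ _ ih => exact Typing.expand _ _ _ _ _ ih
  | incl _ _ _ _ _ h _ ih => exact Typing.incl _ _ _ _ _ h ih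

/-- Iterated `memCons` over a list of (location, type) pairs. -/
def memOf (L : List (Loc × Ty Loc Ch)) : MemTy Loc Ch :=
  L.foldr (fun p m => memCons p.1 p.2 m) memNil

lemma foldr_memCons_single (a : Loc) (l : List (Ty Loc Ch)) (m : MemTy Loc Ch) :
    (l.map (fun r => (a, r))).foldr (fun p m => memCons p.1 p.2 m) m
      = Function.update m a (l ++ m a) := by
  induction l with
  | nil => simp
  | cons r l ih =>
      simp only [List.map_cons, List.foldr_cons, ih]
      simp [memCons, Function.update_idem, Function.update_self]

lemma mem_decomp (s : MemTy Loc Ch) (hs : {a | s a ≠ []}.Finite) :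
    ∃ L : List (Loc × Ty Loc Ch), memOf L = s ∧ ∀ p ∈ L, p.2 ∈ s p.1 := by
  obtain ⟨as, has⟩ : ∃ as : List Loc, ∀ a, s a ≠ [] → a ∈ as :=
    ⟨hs.toFinset.toList, fun a ha => by simpa using ha⟩
  clear hs
  induction as generalizing s with
  | nil =>
      refine ⟨[], ?_, by simp⟩
      funext a
      have : s a = [] := by
        by_contra h; exact absurd (has a h) List.not_mem_nil
      simpa [memOf, memNil] using this.symm
  | cons a as ih =>
      obtain ⟨L', hL', hmem'⟩ := ih (Function.update s a [])
        (fun b hb => by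
          by_cases hba : b = a
          · subst hba; simp at hb
          · rw [Function.update_of_ne hba] at hb
            rcases List.mem_cons.mp (has b hb) with h | h
            · exact absurd h hba
            · exact h)
      refine ⟨(s a).map (fun r => (a, r)) ++ L', ?_, ?_⟩
      · show ((s a).map (fun r => (a, r)) ++ L').foldr
          (fun p m => memCons p.1 p.2 m) memNil = s
        rw [List.foldr_append]
        have : (L'.foldr (fun p m => memCons p.1 p.2 m) memNil) = Function.update s a [] := hL'
        rw [this, foldr_memCons_single]
        simp [Function.update_idem]
      · intro p hp
        rcases List.mem_append.mp hp with hp | hp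
        · obtain ⟨r, hr, rfl⟩ := List.mem_map.mp hp
          exact hr
        · have := hmem' p hp
          by_cases hpa : p.1 = a
          · rw [hpa, Function.update_self] at this
            exact absurd this List.not_mem_nil
          · rwa [Function.update_of_ne hpa] at this

/-- Iterated pops. -/
def popsTm (L : List (Loc × Ty Loc Ch)) (M : Tm Loc Ch) : Tm Loc Ch :=
  L.foldr (fun p M => Tm.pop p.1 M) M

lemma pops_typing (L : List (Loc × Ty Loc Ch)) (M : Tm Loc Ch) (T : SumTy Loc Ch)
    (h : ∀ Γ, Typing Γ M (Ty.arr memNil T)) :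
    ∀ Γ, Typing Γ (popsTm L M) (Ty.arr (memOf L) T) := by
  induction L with
  | nil => exact h
  | cons p L ih =>
      intro Γ
      exact Typing.pop Γ p.2 p.1 _ (memOf L) T (ih (p.2 :: Γ))

lemma pushes_typing (L : List (Loc × Ty Loc Ch)) :
    ∀ (B : Tm Loc Ch) (T : SumTy Loc Ch),
    (∀ p ∈ L, ∃ N, Typing ([] : List (Ty Loc Ch)) N p.2) →
    Typing [] B (Ty.arr (memOf L) T) →
    ∃ M, Typing ([] : List (Ty Loc Ch)) M (Ty.arr memNil T) := by
  induction L with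
  | nil => exact fun B T _ hB => ⟨B, hB⟩
  | cons p L ih =>
      intro B T hz hB
      obtain ⟨N, hN⟩ := hz p (by simp)
      exact ih (Tm.push N p.1 B) T (fun q hq => hz q (by simp [hq]))
        (Typing.push _ N p.2 p.1 B (memOf L) T hN hB)

lemma choice_typing (Γ : List (Ty Loc Ch)) (i : Ch) (m : MemTy Loc Ch) (T : SumTy Loc Ch)
    (hTi : T i = some m) : Typing Γ (Tm.choice i) (Ty.arr m T) := by
  have h1 : Typing Γ (Tm.choice i)
      (Ty.arr (memApp memNil m) (sumExpand m (sumSingle i memNil))) :=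
    Typing.expand Γ _ memNil m (sumSingle i memNil) (Typing.choice Γ i)
  have e0 : memApp memNil m = m := rfl
  have e1 : sumExpand m (sumSingle i memNil) = sumSingle i m := by
    funext j
    by_cases h : j = i <;> simp [sumExpand, sumSingle, h, e0]
  rw [e0, e1] at h1
  have hd : ∀ j, sumSingle i m j = none ∨ Function.update T i none j = none := by
    intro j
    rcases eq_or_ne j i with rfl | h
    · exact Or.inr (by simp)
    · exact Or.inl (by simp [sumSingle, h])
  have h2 := Typing.incl Γ (Tm.choice i) m (sumSingle i m) (Function.update T i none) hd h1
  have e2 : sumOver (sumSingle i m) (Function.update T i none) = T := by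
    funext j
    by_cases h : j = i
    · subst h; simp [sumOver, sumSingle, hTi]
    · simp [sumOver, sumSingle, h, Function.update_of_ne h]
  rwa [e2] at h2

lemma inhab_aux (s m : MemTy Loc Ch) (T : SumTy Loc Ch) (i : Ch) (hTi : T i = some m)
    (hfs : {a | s a ≠ []}.Finite) (hfm : {a | m a ≠ []}.Finite)
    (hz : ∀ a, ∀ r ∈ m a, ∃ N, Typing ([] : List (Ty Loc Ch)) N r) :
    ∃ M, Typing ([] : List (Ty Loc Ch)) M (Ty.arr s T) := by
  obtain ⟨Lm, hLm, hmemm⟩ := mem_decomp m hfm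
  obtain ⟨B, hB⟩ := pushes_typing Lm (Tm.choice i) T
    (fun p hp => hz p.1 p.2 (hmemm p hp))
    (by rw [hLm]; exact choice_typing _ i m T hTi)
  obtain ⟨Ls, hLs, -⟩ := mem_decomp s hfs
  refine ⟨popsTm Ls B, ?_⟩
  have := pops_typing Ls B T (fun Γ => by simpa using (Typing.weaken (Δ := Γ) hB)) []
  rwa [hLs] at this

end Aux

/-- Type inhabitation: every type of the FMC with control is inhabited by a
closed term (the zero term) in the empty context. -/
theorem type_inhabitation [Nonempty Ch] (t : Ty Loc Ch) (h : TyWF t) :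
    ∃ M : Tm Loc Ch, Typing [] M t := by
  induction h with
  | arr s T hs1 hs2 hT1 hT2 hT3 ih_s ih_T =>
      by_cases hI : ∃ i m, T i = some m
      · obtain ⟨i, m, hm⟩ := hI
        exact inhab_aux s m T i hm hs1 (hT2 i m hm) (ih_T i m hm)
      · push_neg at hI
        have hnone : ∀ i, T i = none := fun i => by
          cases h : T i with
          | none => rfl
          | some m => exact absurd h (hI i m)
        obtain ⟨i⟩ := ‹Nonempty Ch›
        obtain ⟨M, hM⟩ := inhab_aux s s (Function.update T i (some s)) i
          (Function.update_self i (some s) T) hs1 hs1 ih_s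
        exact ⟨Tm.loop M i, Typing.loop [] M i s T (hnone i) hM⟩
end

section
/- Typed terms are runnable: if Γ ⊢ M : t, where M is loop-free and every sum type occurring in the derivation is indexed by a nonempty finite set of choices, then for every substitution map σ ∈ ⟦Γ⟧ the term σM belongs to the runnable set ⟦t⟧. In particular, for every closed loop-free term ⊢ M : !!s => !!t_I with nonempty sum types, and every memory S_A ∈ ⟦!!s⟧, there exist i ∈ I and T_A ∈ ⟦!!t_i⟧ with (S_A, M) ⇓ (T_A, i). -/
variable {Loc Ch : Type}

/-- A term is loop-free if it contains no subterm of the form `M^i`. -/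
def Tm.loopFree : Tm Loc Ch → Prop
  | .var _ => True
  | .push N _ M => N.loopFree ∧ M.loopFree
  | .pop _ M => M.loopFree
  | .choice _ => True
  | .caseOf M _ N => M.loopFree ∧ N.loopFree
  | .loop _ _ => False

variable [DecidableEq Loc]

/-- Big-step evaluation `(S, M) ⇓ (T, i)`. -/
inductive Eval : Mem Loc Ch → Tm Loc Ch → Mem Loc Ch → Ch → Prop where
  | choice (S : Mem Loc Ch) (i : Ch) : Eval S (.choice i) S i
  | push (S : Mem Loc Ch) (N : Tm Loc Ch) (a : Loc) (M : Tm Loc Ch) (T : Mem Loc Ch) (i : Ch) :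
      Eval (S.push a N) M T i → Eval S (.push N a M) T i
  | pop (S : Mem Loc Ch) (a : Loc) (N M : Tm Loc Ch) (T : Mem Loc Ch) (i : Ch) :
      Eval S (M.subst 0 N) T i → Eval (S.push a N) (.pop a M) T i
  | case_eq (R S T : Mem Loc Ch) (M N : Tm Loc Ch) (i j : Ch) :
      Eval R M S i → Eval S N T j → Eval R (.caseOf M i N) T j
  | case_ne (R T : Mem Loc Ch) (M N : Tm Loc Ch) (i j : Ch) (h : i ≠ j) :
      Eval R M T i → Eval R (.caseOf M j N) T i
  | loop_eq (R S T : Mem Loc Ch) (M : Tm Loc Ch) (i j : Ch) :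
      Eval R M S i → Eval S (.loop M i) T j → Eval R (.loop M i) T j
  | loop_ne (R T : Mem Loc Ch) (M : Tm Loc Ch) (i j : Ch) (h : i ≠ j) :
      Eval R M T i → Eval R (.loop M j) T i

variable [DecidableEq Loc] [DecidableEq Ch]

/-- A type is OK if it conforms to the grammar (all memory types and sum
types are finitely supported) and is zero-free (every sum type occurring in
it is indexed by a nonempty set of choices). -/
inductive TyOK : Ty Loc Ch → Prop where
  | arr (s : MemTy Loc Ch) (T : SumTy Loc Ch)
      (hs1 : {a | s a ≠ []}.Finite)
      (hs2 : ∀ a, ∀ t ∈ s a, TyOK t)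
      (hT0 : ∃ i, T i ≠ none)
      (hT1 : {i | T i ≠ none}.Finite)
      (hT2 : ∀ i m, T i = some m → {a | m a ≠ []}.Finite)
      (hT3 : ∀ i m, T i = some m → ∀ a, ∀ t ∈ m a, TyOK t) :
      TyOK (.arr s T)

/-- The typing judgement `Γ ⊢ M : t` restricted so that every type occurring
in the derivation is OK (in particular, every sum type occurring in the
derivation is indexed by a nonempty finite set of choices). -/
inductive TypingOK : List (Ty Loc Ch) → Tm Loc Ch → Ty Loc Ch → Prop where
  | var (Γ : List (Ty Loc Ch)) (n : ℕ) (t : Ty Loc Ch) (h : Γ[n]? = some t)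
      (hok : TyOK t) :
      TypingOK Γ (.var n) t
  | choice (Γ : List (Ty Loc Ch)) (i : Ch)
      (hok : TyOK (Ty.arr memNil (sumSingle i memNil) : Ty Loc Ch)) :
      TypingOK Γ (.choice i) (.arr memNil (sumSingle i memNil))
  | push (Γ : List (Ty Loc Ch)) (N : Tm Loc Ch) (r : Ty Loc Ch) (a : Loc)
      (M : Tm Loc Ch) (s : MemTy Loc Ch) (T : SumTy Loc Ch)
      (hok : TyOK (Ty.arr s T)) :
      TypingOK Γ N r → TypingOK Γ M (.arr (memCons a r s) T) →
      TypingOK Γ (.push N a M) (.arr s T)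
  | pop (Γ : List (Ty Loc Ch)) (r : Ty Loc Ch) (a : Loc) (M : Tm Loc Ch)
      (s : MemTy Loc Ch) (T : SumTy Loc Ch)
      (hok : TyOK (Ty.arr (memCons a r s) T)) :
      TypingOK (r :: Γ) M (.arr s T) →
      TypingOK Γ (.pop a M) (.arr (memCons a r s) T)
  | caseOf (Γ : List (Ty Loc Ch)) (M N : Tm Loc Ch) (i : Ch)
      (r s : MemTy Loc Ch) (T : SumTy Loc Ch)
      (hok : TyOK (Ty.arr r T)) :
      TypingOK Γ M (.arr r (Function.update T i (some s))) →
      TypingOK Γ N (.arr s T) →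
      TypingOK Γ (.caseOf M i N) (.arr r T)
  | loop (Γ : List (Ty Loc Ch)) (M : Tm Loc Ch) (i : Ch)
      (s : MemTy Loc Ch) (T : SumTy Loc Ch) (h : T i = none)
      (hok : TyOK (Ty.arr s T)) :
      TypingOK Γ M (.arr s (Function.update T i (some s))) →
      TypingOK Γ (.loop M i) (.arr s T)
  | expand (Γ : List (Ty Loc Ch)) (M : Tm Loc Ch)
      (r s : MemTy Loc Ch) (T : SumTy Loc Ch)
      (hok : TyOK (Ty.arr (memApp r s) (sumExpand s T))) :
      TypingOK Γ M (.arr r T) →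
      TypingOK Γ M (.arr (memApp r s) (sumExpand s T))
  | incl (Γ : List (Ty Loc Ch)) (M : Tm Loc Ch) (r : MemTy Loc Ch)
      (T U : SumTy Loc Ch) (h : ∀ i, T i = none ∨ U i = none)
      (hok : TyOK (Ty.arr r (sumOver T U))) :
      TypingOK Γ M (.arr r T) →
      TypingOK Γ M (.arr r (sumOver T U))

/-- The graph of the runnable-set interpretation of types: `RunSet t R` holds
when `R` is the set `⟦t⟧` of runnable terms for the type `t`, defined by
recursion on types via an interpretation `F` of the component types. -/
inductive RunSet : Ty Loc Ch → Set (Tm Loc Ch) → Prop where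
  | arr (s : MemTy Loc Ch) (T : SumTy Loc Ch) (F : Ty Loc Ch → Set (Tm Loc Ch))
      (hs : ∀ a, ∀ t ∈ s a, RunSet t (F t))
      (hT : ∀ i m, T i = some m → ∀ a, ∀ t ∈ m a, RunSet t (F t)) :
      RunSet (.arr s T)
        { M | ∀ S : Mem Loc Ch,
            (∀ a, List.Forall₂ (fun N t => N ∈ F t) (S a) (s a)) →
            ∃ (i : Ch) (m : MemTy Loc Ch) (U : Mem Loc Ch), T i = some m ∧
              (∀ a, List.Forall₂ (fun N t => N ∈ F t) (U a) (m a)) ∧ Eval S M U i }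

/-- Lift a simultaneous substitution under a binder. -/
def liftSub (σ : ℕ → Tm Loc Ch) : ℕ → Tm Loc Ch
  | 0 => .var 0
  | n + 1 => (σ n).lift 0

/-- Simultaneous capture-avoiding substitution of a substitution map. -/
def Tm.msubst : Tm Loc Ch → (ℕ → Tm Loc Ch) → Tm Loc Ch
  | .var n, σ => σ n
  | .push N a M, σ => .push (N.msubst σ) a (M.msubst σ)
  | .pop a M, σ => .pop a (M.msubst (liftSub σ))
  | .choice i, _ => .choice i
  | .caseOf M i N, σ => .caseOf (M.msubst σ) i (N.msubst σ)
  | .loop M i, σ => .loop (M.msubst σ) i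

/-! ### Auxiliary development -/

section Aux

/-- Renaming of de Bruijn indices. -/
def upRen (f : ℕ → ℕ) : ℕ → ℕ
  | 0 => 0
  | n + 1 => f n + 1

def Tm.rename : Tm Loc Ch → (ℕ → ℕ) → Tm Loc Ch
  | .var n, f => .var (f n)
  | .push N a M, f => .push (N.rename f) a (M.rename f)
  | .pop a M, f => .pop a (M.rename (upRen f))
  | .choice i, _ => .choice i
  | .caseOf M i N, f => .caseOf (M.rename f) i (N.rename f)
  | .loop M i, f => .loop (M.rename f) i

lemma Tm.lift_eq_rename : ∀ (M : Tm Loc Ch) (d : ℕ),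
    M.lift d = M.rename (fun n => if n < d then n else n + 1) := by
  intro M
  induction M with
  | var n => intro d; simp only [Tm.lift, Tm.rename]; split_ifs <;> rfl
  | push N a M ihN ihM => intro d; simp [Tm.lift, Tm.rename, ihN, ihM]
  | pop a M ihM =>
      intro d
      simp only [Tm.lift, Tm.rename, ihM]
      congr 1
      apply congrArg
      funext n
      cases n with
      | zero => simp [upRen]
      | succ n => simp only [upRen]; split_ifs <;> omega
  | choice i => intro d; rfl
  | caseOf M i N ihM ihN => intro d; simp [Tm.lift, Tm.rename, ihM, ihN]
  | loop M i ihM => intro d; simp [Tm.lift, Tm.rename, ihM]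

lemma Tm.lift0_eq (M : Tm Loc Ch) : M.lift 0 = M.rename Nat.succ := by
  rw [Tm.lift_eq_rename]; congr 1

lemma Tm.rename_rename : ∀ (M : Tm Loc Ch) (f g : ℕ → ℕ),
    (M.rename f).rename g = M.rename (g ∘ f) := by
  intro M
  induction M with
  | var n => intros; rfl
  | push N a M ihN ihM => intro f g; simp [Tm.rename, ihN, ihM]
  | pop a M ihM =>
      intro f g
      simp only [Tm.rename, ihM]
      congr 1
      apply congrArg
      funext n
      cases n <;> simp [upRen, Function.comp]
  | choice i => intros; rfl
  | caseOf M i N ihM ihN => intro f g; simp [Tm.rename, ihM, ihN]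
  | loop M i ihM => intro f g; simp [Tm.rename, ihM]

lemma Tm.rename_msubst : ∀ (M : Tm Loc Ch) (f : ℕ → ℕ) (σ : ℕ → Tm Loc Ch),
    (M.rename f).msubst σ = M.msubst (σ ∘ f) := by
  intro M
  induction M with
  | var n => intros; rfl
  | push N a M ihN ihM => intro f σ; simp [Tm.rename, Tm.msubst, ihN, ihM]
  | pop a M ihM =>
      intro f σ
      simp only [Tm.rename, Tm.msubst, ihM]
      congr 1
      apply congrArg
      funext n
      cases n <;> simp [upRen, liftSub, Function.comp]
  | choice i => intros; rfl
  | caseOf M i N ihM ihN => intro f σ; simp [Tm.rename, Tm.msubst, ihM, ihN]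
  | loop M i ihM => intro f σ; simp [Tm.rename, Tm.msubst, ihM]

lemma Tm.msubst_rename : ∀ (M : Tm Loc Ch) (σ : ℕ → Tm Loc Ch) (f : ℕ → ℕ),
    (M.msubst σ).rename f = M.msubst (fun n => (σ n).rename f) := by
  intro M
  induction M with
  | var n => intros; rfl
  | push N a M ihN ihM => intro σ f; simp [Tm.msubst, Tm.rename, ihN, ihM]
  | pop a M ihM =>
      intro σ f
      simp only [Tm.msubst, Tm.rename, ihM]
      congr 1
      apply congrArg
      funext n
      cases n with
      | zero => rfl
      | succ n =>
          show ((σ n).lift 0).rename (upRen f) = ((σ n).rename f).lift 0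
          have hcomp : upRen f ∘ Nat.succ = Nat.succ ∘ f := by
            funext m; simp [upRen, Function.comp]
          rw [Tm.lift0_eq, Tm.lift0_eq, Tm.rename_rename, Tm.rename_rename, hcomp]
  | choice i => intros; rfl
  | caseOf M i N ihM ihN => intro σ f; simp [Tm.msubst, Tm.rename, ihM, ihN]
  | loop M i ihM => intro σ f; simp [Tm.msubst, Tm.rename, ihM]

lemma Tm.msubst_msubst : ∀ (M : Tm Loc Ch) (σ τ : ℕ → Tm Loc Ch),
    (M.msubst σ).msubst τ = M.msubst (fun n => (σ n).msubst τ) := by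
  intro M
  induction M with
  | var n => intros; rfl
  | push N a M ihN ihM => intro σ τ; simp [Tm.msubst, ihN, ihM]
  | pop a M ihM =>
      intro σ τ
      simp only [Tm.msubst, ihM]
      congr 1
      apply congrArg
      funext n
      cases n with
      | zero => rfl
      | succ n =>
          show ((σ n).lift 0).msubst (liftSub τ) = ((σ n).msubst τ).lift 0
          have hcomp : liftSub τ ∘ Nat.succ = fun m => (τ m).rename Nat.succ := by
            funext m
            show liftSub τ (m + 1) = (τ m).rename Nat.succ
            simp [liftSub, Tm.lift0_eq]
          rw [Tm.lift0_eq, Tm.rename_msubst, Tm.lift0_eq, Tm.msubst_rename, hcomp]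
  | choice i => intros; rfl
  | caseOf M i N ihM ihN => intro σ τ; simp [Tm.msubst, ihM, ihN]
  | loop M i ihM => intro σ τ; simp [Tm.msubst, ihM]

lemma Tm.msubst_id : ∀ M : Tm Loc Ch, M.msubst .var = M := by
  intro M
  induction M with
  | var n => rfl
  | push N a M ihN ihM => simp [Tm.msubst, ihN, ihM]
  | pop a M ihM =>
      simp only [Tm.msubst]
      have : (liftSub (.var : ℕ → Tm Loc Ch)) = .var := by
        funext n
        cases n with
        | zero => rfl
        | succ n => simp [liftSub, Tm.lift]
      rw [this, ihM]
  | choice i => rfl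
  | caseOf M i N ihM ihN => simp [Tm.msubst, ihM, ihN]
  | loop M i ihM => simp [Tm.msubst, ihM]

lemma Tm.subst_eq_msubst : ∀ (M : Tm Loc Ch) (k : ℕ) (N : Tm Loc Ch),
    M.subst k N = M.msubst (fun n => if n = k then N else if n < k then .var n else .var (n - 1)) := by
  intro M
  induction M with
  | var n => intros; rfl
  | push P a M ihP ihM => intro k N; simp [Tm.subst, Tm.msubst, ihP, ihM]
  | pop a M ihM =>
      intro k N
      simp only [Tm.subst, Tm.msubst, ihM]
      congr 1
      apply congrArg
      funext n
      cases n with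
      | zero =>
          rw [if_neg (by omega), if_pos (by omega)]
          rfl
      | succ n =>
          simp only [liftSub]
          rcases lt_trichotomy n k with h | h | h
          · rw [if_neg (by omega), if_pos (by omega), if_neg (by omega), if_pos h]
            simp [Tm.lift]
          · subst h
            simp
          · rw [if_neg (by omega), if_neg (by omega), if_neg (by omega), if_neg (by omega)]
            simp only [Tm.lift, Nat.not_lt_zero, if_false]
            congr 1
            omega
  | choice i => intros; rfl
  | caseOf M i P ihM ihP => intro k N; simp [Tm.subst, Tm.msubst, ihM, ihP]
  | loop M i ihM => intro k N; simp [Tm.subst, Tm.msubst, ihM]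

/-- Cons for substitution maps. -/
def consSub (N : Tm Loc Ch) (σ : ℕ → Tm Loc Ch) : ℕ → Tm Loc Ch
  | 0 => N
  | n + 1 => σ n

lemma Tm.msubst_liftSub_subst (M : Tm Loc Ch) (σ : ℕ → Tm Loc Ch) (N : Tm Loc Ch) :
    (M.msubst (liftSub σ)).subst 0 N = M.msubst (consSub N σ) := by
  rw [Tm.subst_eq_msubst, Tm.msubst_msubst]
  congr 1
  funext n
  cases n with
  | zero => rfl
  | succ n =>
      show ((σ n).lift 0).msubst _ = σ n
      rw [Tm.lift0_eq, Tm.rename_msubst]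
      have : (fun m => if m = 0 then N else if m < 0 then Tm.var m else Tm.var (m-1)) ∘ Nat.succ
          = (Tm.var : ℕ → Tm Loc Ch) := by
        funext m; simp [Function.comp]
      rw [this, Tm.msubst_id]

/-- Frame lemma: evaluation is preserved by appending extra memory below. -/
lemma eval_frame {S U : Mem Loc Ch} {M : Tm Loc Ch} {i : Ch} (E : Mem Loc Ch)
    (h : Eval S M U i) : Eval (fun a => S a ++ E a) M (fun a => U a ++ E a) i := by
  have push_app : ∀ (S : Mem Loc Ch) (a : Loc) (N : Tm Loc Ch),
      (fun b => (S.push a N) b ++ E b) = Mem.push (fun b => S b ++ E b) a N := by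
    intro S a N
    funext b
    by_cases hb : b = a
    · subst hb; simp [Mem.push, Function.update_self (f := (S : Loc → List (Tm Loc Ch)))]
    · simp [Mem.push, Function.update_of_ne hb, Function.update_of_ne hb (f := (S : Loc → List (Tm Loc Ch)))]
  induction h with
  | choice S i => exact .choice _ _
  | push S N a M T i h ih =>
      apply Eval.push
      rwa [← push_app]
  | pop S a N M T i h ih =>
      rw [push_app]
      exact Eval.pop _ _ _ _ _ _ ih
  | case_eq R S T M N i j h1 h2 ih1 ih2 => exact .case_eq _ _ _ _ _ _ _ ih1 ih2
  | case_ne R T M N i j hne h ih => exact .case_ne _ _ _ _ _ _ hne ih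
  | loop_eq R S T M i j h1 h2 ih1 ih2 => exact .loop_eq _ _ _ _ _ _ ih1 ih2
  | loop_ne R T M i j hne h ih => exact .loop_ne _ _ _ _ _ hne ih

lemma forall2_imp_mem {α β : Type*} {R R' : α → β → Prop} {l : List α} {l' : List β}
    (hf : List.Forall₂ R l l') (h : ∀ x y, y ∈ l' → R x y → R' x y) :
    List.Forall₂ R' l l' := by
  induction hf with
  | nil => exact .nil
  | cons h1 h2 ih =>
      exact .cons (h _ _ List.mem_cons_self h1)
        (ih fun x y hy => h x y (List.mem_cons_of_mem _ hy))

lemma forall2_iff_mem {α β : Type*} {P Q : α → β → Prop} {l : List α} {ts : List β}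
    (h : ∀ t ∈ ts, ∀ N, P N t ↔ Q N t) :
    List.Forall₂ P l ts ↔ List.Forall₂ Q l ts :=
  ⟨fun hf => forall2_imp_mem hf (fun N t ht hp => (h t ht N).mp hp),
   fun hf => forall2_imp_mem hf (fun N t ht hq => (h t ht N).mpr hq)⟩

/-- Runnability of a term at a type. -/
def Run (t : Ty Loc Ch) (M : Tm Loc Ch) : Prop := ∃ R, RunSet t R ∧ M ∈ R

/-- A memory matches a memory type. -/
def Matches (S : Mem Loc Ch) (m : MemTy Loc Ch) : Prop :=
  ∀ a, List.Forall₂ (fun N t => Run t N) (S a) (m a)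

lemma forall2_mem_congr {F G : Ty Loc Ch → Set (Tm Loc Ch)} {L : List (Tm Loc Ch)}
    {ts : List (Ty Loc Ch)} (h : ∀ t ∈ ts, F t = G t)
    (hf : List.Forall₂ (fun N t => N ∈ F t) L ts) :
    List.Forall₂ (fun N t => N ∈ G t) L ts :=
  forall2_imp_mem hf (fun N t ht hN => h t ht ▸ hN)

lemma runset_unique {t : Ty Loc Ch} {R : Set (Tm Loc Ch)} (h : RunSet t R) :
    ∀ R', RunSet t R' → R = R' := by
  induction h with
  | arr s T F hs hT ihs ihT =>
      intro R' h'
      cases h' with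
      | arr s' T' F' hs' hT' =>
          have hFF' : ∀ a, ∀ t ∈ s a, F t = F' t :=
            fun a t ht => ihs a t ht _ (hs' a t ht)
          have hFF's : ∀ a, ∀ t ∈ s a, F' t = F t :=
            fun a t ht => (hFF' a t ht).symm
          have hFF'm : ∀ i m, T i = some m → ∀ a, ∀ t ∈ m a, F t = F' t :=
            fun i m hi a t ht => ihT i m hi a t ht _ (hT' i m hi a t ht)
          have hFF'ms : ∀ i m, T i = some m → ∀ a, ∀ t ∈ m a, F' t = F t :=
            fun i m hi a t ht => (hFF'm i m hi a t ht).symm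
          ext M
          simp only [Set.mem_setOf_eq]
          constructor
          · intro hM S hS
            obtain ⟨i, m, U, hi, hU, hev⟩ := hM S (fun a =>
              forall2_mem_congr (hFF's a) (hS a))
            exact ⟨i, m, U, hi, fun a =>
              forall2_mem_congr (hFF'm i m hi a) (hU a), hev⟩
          · intro hM S hS
            obtain ⟨i, m, U, hi, hU, hev⟩ := hM S (fun a =>
              forall2_mem_congr (hFF' a) (hS a))
            exact ⟨i, m, U, hi, fun a =>
              forall2_mem_congr (hFF'ms i m hi a) (hU a), hev⟩

lemma runset_exists {t : Ty Loc Ch} (h : TyOK t) : ∃ R, RunSet t R := by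
  induction h with
  | arr s T hs1 hs2 hT0 hT1 hT2 hT3 ih2 ih3 =>
      classical
      refine ⟨_, RunSet.arr s T
        (fun t => if h : ∃ R, RunSet t R then h.choose else ∅) ?_ ?_⟩
      · intro a t ht
        have he := ih2 a t ht
        simpa [dif_pos he] using he.choose_spec
      · intro i m hi a t ht
        have he := ih3 i m hi a t ht
        simpa [dif_pos he] using he.choose_spec

lemma mem_runset_arr {s : MemTy Loc Ch} {T : SumTy Loc Ch} {R : Set (Tm Loc Ch)}
    (h : RunSet (.arr s T) R) (M : Tm Loc Ch) :
    M ∈ R ↔ (∀ S : Mem Loc Ch, Matches S s →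
      ∃ (i : Ch) (m : MemTy Loc Ch) (U : Mem Loc Ch),
        T i = some m ∧ Matches U m ∧ Eval S M U i) := by
  cases h with
  | arr s' T' F hs hT =>
      have hFs : ∀ a, ∀ t ∈ s a, ∀ N, N ∈ F t ↔ Run t N := by
        intro a t ht N
        exact ⟨fun h => ⟨F t, hs a t ht, h⟩,
          fun ⟨R', hR', hN⟩ => by rw [runset_unique (hs a t ht) R' hR']; exact hN⟩
      have hFm : ∀ i m, T i = some m → ∀ a, ∀ t ∈ m a, ∀ N, N ∈ F t ↔ Run t N := by
        intro i m hi a t ht N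
        exact ⟨fun h => ⟨F t, hT i m hi a t ht, h⟩,
          fun ⟨R', hR', hN⟩ => by rw [runset_unique (hT i m hi a t ht) R' hR']; exact hN⟩
      simp only [Set.mem_setOf_eq]
      constructor
      · intro hM S hS
        obtain ⟨i, m, U, hi, hU, hev⟩ := hM S (fun a =>
          (forall2_iff_mem (hFs a)).mpr (hS a))
        exact ⟨i, m, U, hi, fun a => (forall2_iff_mem (hFm i m hi a)).mp (hU a), hev⟩
      · intro hM S hS
        obtain ⟨i, m, U, hi, hU, hev⟩ := hM S (fun a =>
          (forall2_iff_mem (hFs a)).mp (hS a))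
        exact ⟨i, m, U, hi, fun a => (forall2_iff_mem (hFm i m hi a)).mpr (hU a), hev⟩

lemma run_arr_of {s : MemTy Loc Ch} {T : SumTy Loc Ch} {M : Tm Loc Ch}
    (hok : TyOK (Ty.arr s T : Ty Loc Ch))
    (h : ∀ S : Mem Loc Ch, Matches S s →
      ∃ (i : Ch) (m : MemTy Loc Ch) (U : Mem Loc Ch),
        T i = some m ∧ Matches U m ∧ Eval S M U i) :
    Run (.arr s T) M := by
  obtain ⟨R, hR⟩ := runset_exists hok
  exact ⟨R, hR, (mem_runset_arr hR M).mpr h⟩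

lemma run_arr_elim {s : MemTy Loc Ch} {T : SumTy Loc Ch} {M : Tm Loc Ch}
    (h : Run (.arr s T) M) :
    ∀ S : Mem Loc Ch, Matches S s →
      ∃ (i : Ch) (m : MemTy Loc Ch) (U : Mem Loc Ch),
        T i = some m ∧ Matches U m ∧ Eval S M U i := by
  obtain ⟨R, hR, hM⟩ := h
  exact (mem_runset_arr hR M).mp hM

lemma matches_push {S : Mem Loc Ch} {s : MemTy Loc Ch} {a : Loc} {r : Ty Loc Ch}
    {N : Tm Loc Ch} (h : Matches S s) (hr : Run r N) :
    Matches (S.push a N) (memCons a r s) := by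
  intro b
  by_cases hb : b = a
  · subst hb
    simp only [Mem.push, memCons, Function.update_self, Function.update_self (f := (S : Loc → List (Tm Loc Ch)))]
    exact .cons hr (h b)
  · simp only [Mem.push, memCons, Function.update_of_ne hb, Function.update_of_ne hb (f := (S : Loc → List (Tm Loc Ch)))]
    exact h b

lemma matches_cons_decomp {S : Mem Loc Ch} {s : MemTy Loc Ch} {a : Loc} {r : Ty Loc Ch}
    (h : Matches S (memCons a r s)) :
    ∃ N L, S a = N :: L ∧ Run r N ∧ Matches (Function.update S a L) s := by
  have ha := h a
  rw [memCons, Function.update_self] at ha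
  obtain ⟨N, L, hN, hL, hSa⟩ := List.forall₂_cons_right_iff.mp ha
  refine ⟨N, L, hSa, hN, ?_⟩
  intro b
  by_cases hb : b = a
  · subst hb; simpa [Function.update_self (f := (S : Loc → List (Tm Loc Ch)))] using hL
  · rw [Function.update_of_ne hb (f := (S : Loc → List (Tm Loc Ch)))]
    have := h b
    rwa [memCons, Function.update_of_ne hb] at this

/-- The fundamental lemma. -/
lemma fund {Γ : List (Ty Loc Ch)} {M : Tm Loc Ch} {t : Ty Loc Ch}
    (h : TypingOK Γ M t) : M.loopFree → ∀ σ : ℕ → Tm Loc Ch,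
    (∀ n s, Γ[n]? = some s → Run s (σ n)) → Run t (M.msubst σ) := by
  induction h with
  | var Γ n t h hok =>
      intro _ σ hσ
      exact hσ n t h
  | choice Γ i hok =>
      intro _ σ hσ
      apply run_arr_of hok
      intro S hS
      have hSnil : ∀ a, S a = [] := by
        intro a
        have := hS a
        exact List.forall₂_nil_right_iff.mp this
      refine ⟨i, memNil, S, by simp [sumSingle], ?_, ?_⟩
      · intro a; rw [hSnil a]; exact .nil
      · exact .choice S i
  | push Γ N r a M s T hok hN hM ihN ihM =>
      intro hlf σ hσ
      obtain ⟨hlfN, hlfM⟩ := hlf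
      have hNr := ihN hlfN σ hσ
      have hMr := run_arr_elim (ihM hlfM σ hσ)
      apply run_arr_of hok
      intro S hS
      obtain ⟨i, m, U, hi, hU, hev⟩ := hMr (S.push a (N.msubst σ)) (matches_push hS hNr)
      exact ⟨i, m, U, hi, hU, .push _ _ _ _ _ _ hev⟩
  | pop Γ r a M s T hok hM ihM =>
      intro hlf σ hσ
      apply run_arr_of hok
      intro S₀ hS₀
      obtain ⟨N, L, hSa, hrN, hML⟩ := matches_cons_decomp hS₀
      have hσ' : ∀ n t, (r :: Γ)[n]? = some t → Run t (consSub N σ n) := by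
        intro n t ht
        cases n with
        | zero => simp only [List.getElem?_cons_zero, Option.some.injEq] at ht; subst ht; exact hrN
        | succ n => exact hσ n t (by simpa using ht)
      have key := run_arr_elim (ihM hlf (consSub N σ) hσ')
      obtain ⟨i, m, U, hi, hU, hev⟩ := key (Function.update S₀ a L) hML
      refine ⟨i, m, U, hi, hU, ?_⟩
      have hS0eq : S₀ = Mem.push (Function.update S₀ a L) a N := by
        funext b
        by_cases hb : b = a
        · subst hb
          show S₀ b = Function.update (Function.update S₀ b L) b (N :: Function.update S₀ b L b) b
          rw [Function.update_self, Function.update_self (f := (S₀ : Loc → List (Tm Loc Ch))), ← hSa]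
        · show S₀ b = Function.update (Function.update S₀ a L) a (N :: Function.update S₀ a L a) b
          rw [Function.update_of_ne hb, Function.update_of_ne hb (f := (S₀ : Loc → List (Tm Loc Ch)))]
      rw [hS0eq]
      show Eval _ (.pop a (M.msubst (liftSub σ))) _ _
      apply Eval.pop
      rw [Tm.msubst_liftSub_subst]
      exact hev
  | caseOf Γ M N i r s T hok hM hN ihM ihN =>
      intro hlf σ hσ
      obtain ⟨hlfM, hlfN⟩ := hlf
      have hMr := run_arr_elim (ihM hlfM σ hσ)
      have hNr := run_arr_elim (ihN hlfN σ hσ)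
      apply run_arr_of hok
      intro S hS
      obtain ⟨j, m, U, hj, hU, hev⟩ := hMr S hS
      by_cases hji : j = i
      · subst hji
        rw [Function.update_self] at hj
        obtain rfl : s = m := Option.some.inj hj
        obtain ⟨k, m', V, hk, hV, hev2⟩ := hNr U hU
        exact ⟨k, m', V, hk, hV, .case_eq _ _ _ _ _ _ _ hev hev2⟩
      · rw [Function.update_of_ne hji] at hj
        exact ⟨j, m, U, hj, hU, .case_ne _ _ _ _ _ _ hji hev⟩
  | loop Γ M i s T h hok hM ihM =>
      intro hlf
      exact hlf.elim
  | expand Γ M r s T hok hM ihM =>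
      intro hlf σ hσ
      have hMr := run_arr_elim (ihM hlf σ hσ)
      apply run_arr_of hok
      intro S₀ hS₀
      have h1 : Matches (fun a => (S₀ a).take (r a).length) r :=
        fun a => List.forall₂_take_append (S₀ a) (r a) (s a) (hS₀ a)
      have h2 : Matches (fun a => (S₀ a).drop (r a).length) s :=
        fun a => List.forall₂_drop_append (S₀ a) (r a) (s a) (hS₀ a)
      obtain ⟨i, m, U, hi, hU, hev⟩ := hMr _ h1
      refine ⟨i, memApp m s, fun a => U a ++ (S₀ a).drop (r a).length, ?_, ?_, ?_⟩
      · simp [sumExpand, hi, memApp]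
      · intro a
        exact List.rel_append (hU a) (h2 a)
      · have h3 := eval_frame (fun a => (S₀ a).drop (r a).length) hev
        simp only [List.take_append_drop] at h3
        exact h3
  | incl Γ M r T U h hok hM ihM =>
      intro hlf σ hσ
      have hMr := run_arr_elim (ihM hlf σ hσ)
      apply run_arr_of hok
      intro S hS
      obtain ⟨i, m, V, hi, hV, hev⟩ := hMr S hS
      exact ⟨i, m, V, by simp [sumOver, hi], hV, hev⟩

end Aux

/-- Typed terms are runnable: for a loop-free term typed with nonempty sum
types throughout the derivation, every substitution instance by runnable
terms is runnable; in particular, a closed such term evaluates from any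
runnable input memory to a runnable output memory and a choice in the
index set. -/
theorem typed_terms_are_runnable (Loc Ch : Type) [DecidableEq Loc] [DecidableEq Ch] :
    (∀ (Γ : List (Ty Loc Ch)) (M : Tm Loc Ch) (t : Ty Loc Ch) (σ : ℕ → Tm Loc Ch),
      TypingOK Γ M t → M.loopFree →
      (∀ (n : ℕ) (s : Ty Loc Ch), Γ[n]? = some s → ∃ R, RunSet s R ∧ σ n ∈ R) →
      ∃ R, RunSet t R ∧ M.msubst σ ∈ R) ∧
    (∀ (M : Tm Loc Ch) (s : MemTy Loc Ch) (T : SumTy Loc Ch),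
      TypingOK [] M (.arr s T) → M.loopFree →
      ∀ S : Mem Loc Ch,
        (∀ a, List.Forall₂ (fun (N : Tm Loc Ch) (t : Ty Loc Ch) => ∃ R, RunSet t R ∧ N ∈ R) (S a) (s a)) →
        ∃ (i : Ch) (m : MemTy Loc Ch) (U : Mem Loc Ch), T i = some m ∧
          (∀ a, List.Forall₂ (fun (N : Tm Loc Ch) (t : Ty Loc Ch) => ∃ R, RunSet t R ∧ N ∈ R) (U a) (m a)) ∧
          Eval S M U i) := by
  constructor
  · intro Γ M t σ h hlf hσ
    exact fund h hlf σ hσ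
  · intro M s T h hlf S hS
    have hr := fund h hlf .var (fun n t hn => by simp at hn)
    rw [Tm.msubst_id] at hr
    exact run_arr_elim hr S hS
end
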